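/- (Duopoly equilibrium without decision conflict) Fix I > 0. For reals q, p with 0 ≤ q ≤ p ≤ I, define a firm's profit against the opponent strategy (I/3, I) by π(q,p) = ((q/p)/((q/p) + 1/3)) · (p − q), with the convention q/p = 0 when p = 0. Then π(q,p) ≤ I/3 for all such (q,p), and π(I/3, I) = I/3; that is, the symmetric profile in which both firms play (q,p) = (I/3, I) is a Nash equilibrium of the simultaneous price-quality game with logit demand, and each firm's equilibrium expected profit equals I/3. -/

import Mathlib

/-- Duopoly equilibrium without decision conflict: against an opponent playing
`(I/3, I)`, every feasible strategy `(q,p)` yields profit at most `I/3` under logit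
demand, and `(I/3, I)` attains this bound, so the symmetric profile `(I/3, I)` is a Nash
equilibrium with equilibrium expected profit `I/3` for each firm. -/
theorem stmt13 (I : ℝ) (hI : 0 < I) :
    (∀ q p : ℝ, 0 ≤ q → q ≤ p → p ≤ I →
      (q / p) / (q / p + 1 / 3) * (p - q) ≤ I / 3) ∧
    ((I / 3) / I) / ((I / 3) / I + 1 / 3) * (I - I / 3) = I / 3 := by
  constructor
  · intro q p hq hqp hpI
    rcases eq_or_lt_of_le (hq.trans hqp) with hp | hp
    · rw [← hp]
      simp
      positivity
    · set u := q / p with hu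
      have hu0 : 0 ≤ u := div_nonneg hq hp.le
      have hu1 : u ≤ 1 := (div_le_one hp).mpr hqp
      have hqe : q = u * p := by rw [hu, div_mul_cancel₀ q hp.ne']
      have hden : 0 < u + 1 / 3 := by linarith
      rw [div_mul_eq_mul_div, div_le_iff₀ hden]
      have key : u * (1 - u) ≤ (1 / 3) * (u + 1 / 3) := by nlinarith [sq_nonneg (u - 1/3)]
      have : u * (p - q) = p * (u * (1 - u)) := by rw [hqe]; ring
      rw [this]
      calc p * (u * (1 - u)) ≤ I * ((1/3) * (u + 1/3)) := by
            apply mul_le_mul hpI key (by nlinarith) hI.le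
        _ = I / 3 * (u + 1 / 3) := by ring
  · have : (I / 3) / I = 1 / 3 := by field_simp
    rw [this]; ring
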